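/- For all integers m, n ≥ 0, the derangement numbers satisfy D_{m+n} / n! = ∑_{l=0}^{n} ∑_{k=0}^{m} C(k+n-l-1, n-l) · C(m, k) · (-1)^{m-k} · (k!/l!) · D_l, where the identity is understood in the rational numbers. -/

import Mathlib

open Finset

def Gp (m r : ℕ) : ℚ :=
  ∑ k ∈ Finset.range (m+1), (m.choose k : ℚ) * (-1)^k * ((k+r).factorial : ℚ)

lemma Gp_zero (r : ℕ) : Gp 0 r = (r.factorial : ℚ) := by
  simp [Gp]

lemma Gp_succ (m r : ℕ) : Gp (m+1) r = Gp m r - Gp m (r+1) := by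
  have h1 : Gp (m+1) r
      = (∑ i ∈ Finset.range (m+1),
          ((m.choose i : ℚ) + (m.choose (i+1) : ℚ)) * (-1)^(i+1) * ((i+1+r).factorial : ℚ))
        + (r.factorial : ℚ) := by
    rw [Gp, Finset.sum_range_succ']
    simp [Nat.choose_succ_succ]
  have h2 : ∑ i ∈ Finset.range (m+1),
      (m.choose (i+1) : ℚ) * (-1)^(i+1) * ((i+1+r).factorial : ℚ)
      = Gp m r - (r.factorial : ℚ) := by
    have := Finset.sum_range_succ' (fun k => (m.choose k : ℚ) * (-1)^k * ((k+r).factorial : ℚ)) (m+1)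
    -- ∑_{k∈range(m+2)} g k = ∑_{i∈range(m+1)} g (i+1) + g 0
    have h3 : (∑ k ∈ Finset.range (m+2), (m.choose k : ℚ) * (-1)^k * ((k+r).factorial : ℚ))
        = Gp m r := by
      rw [Finset.sum_range_succ]
      simp [Gp]
    rw [h3] at this
    simp only [Nat.choose_zero_right, Nat.cast_one, pow_zero, one_mul, Nat.zero_add] at this
    linarith [this]
  have h4 : ∑ i ∈ Finset.range (m+1),
      (m.choose i : ℚ) * (-1)^(i+1) * ((i+1+r).factorial : ℚ) = - Gp m (r+1) := by
    rw [Gp, ← Finset.sum_neg_distrib]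
    · apply Finset.sum_congr rfl
      intro i _
      have : i + 1 + r = i + (r+1) := by omega
      rw [this]
      ring
  calc Gp (m+1) r = _ := h1
    _ = Gp m r - Gp m (r+1) := by
        rw [show (∑ i ∈ Finset.range (m+1),
          ((m.choose i : ℚ) + (m.choose (i+1) : ℚ)) * (-1)^(i+1) * ((i+1+r).factorial : ℚ))
          = (∑ i ∈ Finset.range (m+1), (m.choose i : ℚ) * (-1)^(i+1) * ((i+1+r).factorial : ℚ))
            + ∑ i ∈ Finset.range (m+1), (m.choose (i+1) : ℚ) * (-1)^(i+1) * ((i+1+r).factorial : ℚ)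
          from by rw [← Finset.sum_add_distrib]; apply Finset.sum_congr rfl; intros; ring]
        rw [h2, h4]; ring

def Hp (m n : ℕ) : ℚ :=
  ∑ i ∈ Finset.range (n+1), (-1:ℚ)^i * (n.choose i : ℚ) * Gp m (n-i)

-- Pascal split: S = Hp' at n+1 + Hp at n, where S uses C(n,i) but argument n+1-i
lemma Ssub (m n : ℕ) :
    ∑ i ∈ Finset.range (n+1), (-1:ℚ)^i * (n.choose i : ℚ) * Gp m (n+1-i)
    = Hp m (n+1) + Hp m n := by
  set h : ℕ → ℚ := fun j => (-1:ℚ)^j * (n.choose j : ℚ) * Gp m (n+1-j) with hh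
  have hmid : Hp m (n+1)
      = (∑ i ∈ Finset.range (n+1),
          (-1:ℚ)^(i+1) * ((n.choose i : ℚ) + (n.choose (i+1) : ℚ)) * Gp m (n-i))
        + Gp m (n+1) := by
    rw [Hp, Finset.sum_range_succ']
    simp only [Nat.choose_zero_right, Nat.cast_one, pow_zero, one_mul, Nat.sub_zero]
    congr 1
    apply Finset.sum_congr rfl
    intro i hi
    have h1 : (n+1) - (i+1) = n - i := by omega
    rw [h1, Nat.choose_succ_succ]
    push_cast
    ring
  have hT : ∑ i ∈ Finset.range (n+1), (-1:ℚ)^(i+1) * (n.choose (i+1) : ℚ) * Gp m (n-i)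
      = (∑ i ∈ Finset.range (n+1), h i) + h (n+1) - h 0 := by
    have := Finset.sum_range_succ' h (n+1)
    -- ∑_{j∈range(n+2)} h j = ∑_{i∈range(n+1)} h (i+1) + h 0
    have h5 : ∑ i ∈ Finset.range (n+1), h (i+1)
        = (∑ i ∈ Finset.range (n+1), h i) + h (n+1) - h 0 := by
      rw [Finset.sum_range_succ] at this
      linarith [this]
    have h6 : ∑ i ∈ Finset.range (n+1), (-1:ℚ)^(i+1) * (n.choose (i+1) : ℚ) * Gp m (n-i)
        = ∑ i ∈ Finset.range (n+1), h (i+1) := by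
      apply Finset.sum_congr rfl
      intro i hi
      simp only [hh]
      congr 2
      omega
    rw [h6, h5]
  have hlast : h (n+1) = 0 := by simp [hh]
  have h0 : h 0 = Gp m (n+1) := by simp [hh]
  have hsplit : Hp m (n+1)
      = (∑ i ∈ Finset.range (n+1), (-1:ℚ)^(i+1) * (n.choose i : ℚ) * Gp m (n-i))
        + (∑ i ∈ Finset.range (n+1), (-1:ℚ)^(i+1) * (n.choose (i+1) : ℚ) * Gp m (n-i))
        + Gp m (n+1) := by
    rw [hmid, ← Finset.sum_add_distrib]
    congr 1
    apply Finset.sum_congr rfl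
    intros; ring
  have hneg : ∑ i ∈ Finset.range (n+1), (-1:ℚ)^(i+1) * (n.choose i : ℚ) * Gp m (n-i)
      = - Hp m n := by
    rw [Hp, ← Finset.sum_neg_distrib]
    apply Finset.sum_congr rfl
    intros; ring
  rw [hsplit, hneg, hT, hlast, h0]
  ring

-- D_p as rational sum
lemma derangements_eq (p : ℕ) :
    (numDerangements p : ℚ) = ∑ i ∈ Finset.range (p+1),
      (-1:ℚ)^i * ((p.factorial : ℚ) / (i.factorial : ℚ)) := by
  have h := numDerangements_sum p
  have h2 : ((numDerangements p : ℤ) : ℚ) = (numDerangements p : ℚ) := by push_cast; ring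
  rw [← h2, h]
  push_cast
  apply Finset.sum_congr rfl
  intro i hi
  have hip : i ≤ p := by simpa [Nat.lt_succ_iff] using hi
  have key : (i.factorial : ℚ) * ((i+1).ascFactorial (p-i) : ℚ) = (p.factorial : ℚ) := by
    have := Nat.factorial_mul_ascFactorial i (p-i)
    have h3 : i + (p - i) = p := by omega
    rw [h3] at this
    exact_mod_cast congrArg (Nat.cast : ℕ → ℚ) this
  have hif : (i.factorial : ℚ) ≠ 0 := by positivity
  field_simp
  linear_combination key

-- base case: ∑ (-1)^i C(n,i) (n-i)! = D_n
lemma Hp_zero (n : ℕ) : Hp 0 n = (numDerangements n : ℚ) := by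
  rw [Hp, derangements_eq]
  apply Finset.sum_congr rfl
  intro i hi
  have hin : i ≤ n := by simpa [Nat.lt_succ_iff] using hi
  rw [Gp_zero]
  have key := Nat.choose_mul_factorial_mul_factorial hin
  have keyQ : (n.choose i : ℚ) * (i.factorial : ℚ) * ((n-i).factorial : ℚ)
      = (n.factorial : ℚ) := by exact_mod_cast congrArg (Nat.cast : ℕ → ℚ) key
  have hif : (i.factorial : ℚ) ≠ 0 := by positivity
  field_simp
  linear_combination keyQ

lemma Hp_eq (m : ℕ) : ∀ n, Hp m n = (-1:ℚ)^m * (numDerangements (m+n) : ℚ) := by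
  induction m with
  | zero => intro n; simpa using Hp_zero n
  | succ m ih =>
    intro n
    have step : Hp (m+1) n
        = Hp m n - (∑ i ∈ Finset.range (n+1), (-1:ℚ)^i * (n.choose i : ℚ) * Gp m (n+1-i)) := by
      rw [Hp, Hp, ← Finset.sum_sub_distrib]
      apply Finset.sum_congr rfl
      intro i hi
      have hin : i ≤ n := by simpa [Nat.lt_succ_iff] using hi
      rw [Gp_succ]
      have : n - i + 1 = n + 1 - i := by omega
      rw [this]
      ring
    rw [step, Ssub, ih (n+1), ih n]
    have : m + (n+1) = m + 1 + n := by omega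
    rw [this]; ring

-- hockey stick
lemma hockey (k : ℕ) : ∀ N, ∑ j ∈ Finset.range (N+1), (k + j - 1).choose j = (k+N).choose N := by
  intro N
  induction N with
  | zero => simp
  | succ N ih =>
    rw [Finset.sum_range_succ, ih]
    have h1 : k + (N+1) - 1 = k + N := by omega
    rw [h1]
    rw [show k + (N+1) = (k+N)+1 from rfl, Nat.choose_succ_succ]

-- reindex Icc i n via l ↦ n - l
lemma sum_Icc_reindex (f : ℕ → ℕ) (i n : ℕ) (h : i ≤ n) :
    ∑ l ∈ Finset.Icc i n, f (n - l) = ∑ j ∈ Finset.range (n - i + 1), f j := by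
  apply Finset.sum_nbij' (fun l => n - l) (fun j => n - j)
  · intro a ha; simp only [Finset.mem_Icc, Finset.mem_range] at *; omega
  · intro a ha; simp only [Finset.mem_Icc, Finset.mem_range] at *; omega
  · intro a ha; simp only [Finset.mem_Icc, Finset.mem_range] at *; omega
  · intro a ha; simp only [Finset.mem_Icc, Finset.mem_range] at *; omega
  · intro a ha; rfl

lemma innerSumChoose (k i n : ℕ) (h : i ≤ n) :
    ∑ l ∈ Finset.Icc i n, (k + n - l - 1).choose (n - l) = (k + (n - i)).choose (n - i) := by
  have h1 : ∑ l ∈ Finset.Icc i n, (k + n - l - 1).choose (n - l)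
      = ∑ l ∈ Finset.Icc i n, (fun j => (k + j - 1).choose j) (n - l) := by
    apply Finset.sum_congr rfl
    intro l hl
    simp only [Finset.mem_Icc] at hl
    congr 1
    omega
  rw [h1]
  exact (sum_Icc_reindex (fun j => (k+j-1).choose j) i n h).trans (hockey k (n-i))

lemma negpow {k m : ℕ} (h : k ≤ m) : ((-1:ℚ))^(m-k) = (-1)^m * (-1)^k := by
  have h1 : m - k + (k + k) = m + k := by omega
  have h2 : ((-1:ℚ))^(m-k) * ((-1:ℚ)^(k+k)) = (-1)^m * (-1)^k := by
    rw [← pow_add, h1, pow_add]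
  simpa [Even.neg_one_pow (⟨k, rfl⟩ : Even (k+k))] using h2

lemma Ddiv (l : ℕ) : (numDerangements l : ℚ) / (l.factorial : ℚ)
    = ∑ i ∈ Finset.range (l+1), (-1:ℚ)^i / (i.factorial : ℚ) := by
  rw [derangements_eq, Finset.sum_div]
  apply Finset.sum_congr rfl
  intro i hi
  have hl : (l.factorial : ℚ) ≠ 0 := by positivity
  have hi' : (i.factorial : ℚ) ≠ 0 := by positivity
  field_simp

/-- **Recurrence for derangement numbers** (Theorem 2.1).
For all integers `m, n ≥ 0`,
`D_{m+n} / n! = ∑_{l=0}^{n} ∑_{k=0}^{m} C(k+n-l-1, n-l) ⬝ C(m,k) ⬝ (-1)^{m-k} ⬝ (k!/l!) ⬝ D_l`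
as rational numbers. -/
theorem derangement_recurrence (m n : ℕ) :
    (numDerangements (m + n) : ℚ) / (n.factorial : ℚ) =
      ∑ l ∈ Finset.range (n + 1), ∑ k ∈ Finset.range (m + 1),
        ((k + n - l - 1).choose (n - l) : ℚ) * (m.choose k : ℚ) * (-1 : ℚ) ^ (m - k) *
          ((k.factorial : ℚ) / (l.factorial : ℚ)) * (numDerangements l : ℚ) := by
  set c : ℕ → ℕ → ℚ := fun k l =>
    ((k + n - l - 1).choose (n - l) : ℚ) * (m.choose k : ℚ) * (-1 : ℚ) ^ (m - k)
      * (k.factorial : ℚ) with hc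
  have step1 : (∑ l ∈ Finset.range (n + 1), ∑ k ∈ Finset.range (m + 1),
        ((k + n - l - 1).choose (n - l) : ℚ) * (m.choose k : ℚ) * (-1 : ℚ) ^ (m - k) *
          ((k.factorial : ℚ) / (l.factorial : ℚ)) * (numDerangements l : ℚ))
      = ∑ l ∈ Finset.range (n+1), ∑ i ∈ Finset.range (l+1),
          (∑ k ∈ Finset.range (m+1), c k l) * ((-1:ℚ)^i / (i.factorial : ℚ)) := by
    apply Finset.sum_congr rfl
    intro l _
    rw [← Finset.mul_sum, ← Ddiv]
    rw [Finset.sum_mul]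
    apply Finset.sum_congr rfl
    intro k _
    simp only [hc]
    ring
  have step2 : (∑ l ∈ Finset.range (n+1), ∑ i ∈ Finset.range (l+1),
          (∑ k ∈ Finset.range (m+1), c k l) * ((-1:ℚ)^i / (i.factorial : ℚ)))
      = ∑ i ∈ Finset.range (n+1), ∑ l ∈ Finset.Icc i n,
          (∑ k ∈ Finset.range (m+1), c k l) * ((-1:ℚ)^i / (i.factorial : ℚ)) := by
    apply Finset.sum_comm'
    intro l i
    simp only [Finset.mem_range, Finset.mem_Icc]
    omega
  have step3 : ∀ i ∈ Finset.range (n+1),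
      (∑ l ∈ Finset.Icc i n, ∑ k ∈ Finset.range (m+1), c k l)
      = (-1:ℚ)^m / ((n-i).factorial : ℚ) * Gp m (n-i) := by
    intro i hi
    have hin : i ≤ n := by simpa [Nat.lt_succ_iff] using hi
    rw [Finset.sum_comm]
    rw [Gp, Finset.mul_sum]
    apply Finset.sum_congr rfl
    intro k hk
    have hkm : k ≤ m := by simpa [Nat.lt_succ_iff] using hk
    have hinner : ∑ l ∈ Finset.Icc i n, c k l
        = ((k + (n-i)).choose (n-i) : ℚ) * (m.choose k : ℚ) * (-1 : ℚ) ^ (m - k)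
          * (k.factorial : ℚ) := by
      rw [hc]
      simp only
      rw [← Finset.sum_mul, ← Finset.sum_mul, ← Finset.sum_mul]
      rw [show (∑ l ∈ Finset.Icc i n, ((k + n - l - 1).choose (n - l) : ℚ))
          = (((k + (n-i)).choose (n-i) : ℕ) : ℚ) from by
        rw [← Nat.cast_sum]
        exact_mod_cast congrArg (Nat.cast : ℕ → ℚ) (innerSumChoose k i n hin)]
    rw [hinner, negpow hkm]
    have hcf : ((k + (n-i)).choose (n-i) : ℚ) * ((n-i).factorial : ℚ) * (k.factorial : ℚ)
        = ((k + (n-i)).factorial : ℚ) := by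
      have h := Nat.choose_mul_factorial_mul_factorial (Nat.le_add_left (n-i) k)
      have h2 : k + (n-i) - (n-i) = k := by omega
      rw [h2] at h
      exact_mod_cast congrArg (Nat.cast : ℕ → ℚ) h
    have hrf : ((n-i).factorial : ℚ) ≠ 0 := by positivity
    field_simp
    linear_combination (m.choose k : ℚ) * hcf
  have lhs_eq : (numDerangements (m + n) : ℚ) / (n.factorial : ℚ)
      = ∑ i ∈ Finset.range (n+1),
          ((-1:ℚ)^m / ((n-i).factorial : ℚ) * Gp m (n-i)) * ((-1:ℚ)^i / (i.factorial : ℚ)) := by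
    have hD : (numDerangements (m+n) : ℚ) = (-1:ℚ)^m * Hp m n := by
      rw [Hp_eq m n]
      have : ((-1:ℚ)^m) * ((-1:ℚ)^m) = 1 := by
        rw [← pow_add]
        exact Even.neg_one_pow ⟨m, rfl⟩
      nlinarith [this]
    rw [hD, Hp, Finset.mul_sum, Finset.sum_div]
    apply Finset.sum_congr rfl
    intro i hi
    have hin : i ≤ n := by simpa [Nat.lt_succ_iff] using hi
    have key := Nat.choose_mul_factorial_mul_factorial hin
    have keyQ : (n.choose i : ℚ) * (i.factorial : ℚ) * ((n-i).factorial : ℚ)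
        = (n.factorial : ℚ) := by exact_mod_cast congrArg (Nat.cast : ℕ → ℚ) key
    have h1 : (i.factorial : ℚ) ≠ 0 := by positivity
    have h2 : ((n-i).factorial : ℚ) ≠ 0 := by positivity
    have h3 : (n.factorial : ℚ) ≠ 0 := by positivity
    field_simp
    linear_combination Gp m (n-i) * keyQ
  rw [step1, step2, lhs_eq]
  apply Finset.sum_congr rfl
  intro i hi
  rw [← Finset.sum_mul, step3 i hi]
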